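/- Let A be a ring (or algebra) and G a subgroup of the group of units of A. If W is a c.e. set of words in the generators of G whose images in G are pairwise distinct, then the corresponding images in A are pairwise distinct; consequently, if the word problem of A (as a ceer) is dark and G is infinite, then the word problem of G is dark. -/

import Mathlib

/-- A predicate on a primcodable type is computably enumerable (c.e.). -/
def CePred {α : Type} [Primcodable α] (p : α → Prop) : Prop :=
  Partrec fun a => Part.assert (p a) fun _ => Part.some ()

/-- The `e`-th c.e. set `W_e`. -/
def WSet (e : ℕ) : Set ℕ :=
  {n | ((Denumerable.ofNat Nat.Partrec.Code e).eval n).Dom}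

/-- A ceer: a computably enumerable equivalence relation on ℕ. -/
def Ceer (E : ℕ → ℕ → Prop) : Prop :=
  Equivalence E ∧ CePred fun p : ℕ × ℕ => E p.1 p.2

/-- `E` has infinitely many equivalence classes. -/
def InfiniteClasses (E : ℕ → ℕ → Prop) : Prop :=
  ∀ l : List ℕ, ∃ n, ∀ m ∈ l, ¬ E n m

/-- `E` is light: some infinite c.e. set is an `E`-transversal (pairwise inequivalent). -/
def Light (E : ℕ → ℕ → Prop) : Prop :=
  ∃ e, (WSet e).Infinite ∧ ∀ i ∈ WSet e, ∀ j ∈ WSet e, i ≠ j → ¬ E i j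

/-- `E` is dark: infinitely many classes, but not light. -/
def Dark (E : ℕ → ℕ → Prop) : Prop :=
  InfiniteClasses E ∧ ¬ Light E

/-- `E` is algorithmically finite: there is no infinite c.e. set of pairwise
`E`-inequivalent numbers. -/
def AlgFinite (E : ℕ → ℕ → Prop) : Prop :=
  ¬ ∃ W : Set ℕ, CePred (· ∈ W) ∧ W.Infinite ∧
      ∀ i ∈ W, ∀ j ∈ W, i ≠ j → ¬ E i j

/-- The word problem of a structure with respect to a coding `ν` of words. -/
def WP {α A : Type} (ν : α → A) : α → α → Prop := fun a b => ν a = ν b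

open Nat.Partrec (Code)
open Nat.Partrec.Code

lemma image_WSet (t : ℕ → ℕ) (ht : Computable t) (e : ℕ) :
    ∃ e', WSet e' = t '' WSet e := by
  classical
  set c : Code := Denumerable.ofNat Code e with hc
  set p : ℕ → ℕ → Bool := fun m z =>
    decide (t z.unpair.1 = m) && (evaln z.unpair.2 c z.unpair.1).isSome with hp
  have h1 : Computable fun q : ℕ × ℕ => decide (t q.2.unpair.1 = q.1) :=
    (Primrec₂.to_comp Primrec.eq.decide).comp
      (ht.comp (Primrec.to_comp (Primrec.fst.comp (Primrec.unpair.comp Primrec.snd))))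
      Computable.fst
  have h2 : Computable fun q : ℕ × ℕ => (evaln q.2.unpair.2 c q.2.unpair.1).isSome :=
    (Primrec.option_isSome.comp (primrec_evaln.comp
      (((Primrec.snd.comp (Primrec.unpair.comp Primrec.snd)).pair
        (Primrec.const c)).pair
        (Primrec.fst.comp (Primrec.unpair.comp Primrec.snd))))).to_comp
  have hpc : Computable₂ p :=
    (Computable.cond h1 h2 (Computable.const false)).of_eq fun q => by
      rw [hp]; cases hd : decide (t q.2.unpair.1 = q.1) <;> simp [hd]
  set F : ℕ →. ℕ := fun m => Nat.rfindOpt fun z => bif p m z then some 0 else none with hF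
  have hFp : Partrec F := by
    apply Partrec.rfindOpt
    exact Computable.cond hpc (Computable.const (some 0)) (Computable.const none)
  obtain ⟨c', hc'⟩ := exists_code.1 hFp
  refine ⟨Encodable.encode c', ?_⟩
  ext m
  have hdom : (F m).Dom ↔ ∃ z, p m z = true := by
    rw [hF]
    simp only [Nat.rfindOpt_dom]
    constructor
    · rintro ⟨n, a, ha⟩
      refine ⟨n, ?_⟩
      by_contra h
      simp [Bool.eq_false_iff.2 h] at ha
    · rintro ⟨n, h⟩
      exact ⟨n, 0, by simp [h]⟩
  have heval : (c'.eval m).Dom ↔ (F m).Dom := by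
    rw [hc']
    simp [Encodable.decode_nat, Part.assert_pos trivial]
  simp only [WSet, Set.mem_setOf_eq, Denumerable.ofNat_encode]
  rw [heval, hdom]
  constructor
  · rintro ⟨z, hz⟩
    simp only [hp, Bool.and_eq_true, decide_eq_true_eq, Option.isSome_iff_exists] at hz
    obtain ⟨hz1, x, hz2⟩ := hz
    have : x ∈ c.eval z.unpair.1 := evaln_complete.2 ⟨_, hz2⟩
    exact ⟨z.unpair.1, Part.dom_iff_mem.2 ⟨x, this⟩, hz1⟩
  · rintro ⟨n, hn, rfl⟩
    obtain ⟨x, hx⟩ := Part.dom_iff_mem.1 hn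
    obtain ⟨k, hk⟩ := evaln_complete.1 hx
    refine ⟨Nat.pair n k, ?_⟩
    simp [hp, Nat.unpair_pair, Option.isSome_iff_exists]
    exact ⟨x, hk⟩

/-- Let `A` be a ring, `G` a subgroup of its group of units, `α` a coding of words of `A` and
`γ` a coding of words of `G`, with a computable translation `t` of `G`-words into `A`-words.
Then any c.e. set of `G`-words with pairwise distinct values in `G` translates to `A`-words
with pairwise distinct values in `A`; consequently, if the word problem of `A` is dark and `G`
is infinite then the word problem of `G` is dark. -/
theorem stmt13 {A : Type} [Ring A] (G : Subgroup Aˣ)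
    (α : ℕ → A) (hα : Function.Surjective α)
    (γ : ℕ → G) (hγ : Function.Surjective γ)
    (t : ℕ → ℕ) (ht : Computable t)
    (htc : ∀ n, ((γ n : Aˣ) : A) = α (t n)) :
    (∀ e, (∀ i ∈ WSet e, ∀ j ∈ WSet e, i ≠ j → γ i ≠ γ j) →
        ∀ i ∈ WSet e, ∀ j ∈ WSet e, i ≠ j → α (t i) ≠ α (t j)) ∧
    (Dark (WP α) → Infinite G → Dark (WP γ)) := by
  classical
  have key : ∀ i j : ℕ, α (t i) = α (t j) → γ i = γ j := by
    intro i j h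
    have : ((γ i : Aˣ) : A) = ((γ j : Aˣ) : A) := by rw [htc, htc, h]
    exact Subtype.ext (Units.ext this)
  constructor
  · intro e he i hi j hj hij h
    exact he i hi j hj hij (key i j h)
  · intro hDark hInf
    constructor
    · intro l
      obtain ⟨g, hg⟩ := Infinite.exists_notMem_finset (l.map γ).toFinset
      obtain ⟨n, rfl⟩ := hγ g
      refine ⟨n, fun m hm hE => hg ?_⟩
      rw [List.mem_toFinset, List.mem_map]
      exact ⟨m, hm, hE.symm⟩
    · rintro ⟨e, hInfW, hTrans⟩
      obtain ⟨e', he'⟩ := image_WSet t ht e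
      apply hDark.2
      refine ⟨e', ?_, ?_⟩
      · rw [he']
        refine Set.Infinite.image ?_ hInfW
        intro i hi j hj hij
        by_contra hne
        exact hTrans i hi j hj hne (key i j (by rw [hij]))
      · rw [he']
        rintro _ ⟨i, hi, rfl⟩ _ ⟨j, hj, rfl⟩ hne hE
        have hij : i ≠ j := fun h => hne (by rw [h])
        exact hTrans i hi j hj hij (key i j hE)
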